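/- (Connes' Cantor-set spectral triple, compact resolvent) Let ℓ : ℕ → ℝ satisfy ℓ_n > 0 for all n and ℓ_n → 0. On the Hilbert space H = ℓ²(ℕ × Bool, ℂ), let D₀ be the operator defined on the dense subspace of finitely supported elements by (D₀ξ)(n, b) = ℓ_n⁻¹ · ξ(n, ¬b). Then the closure D of D₀ is self-adjoint, and for every λ ∈ ℂ \ ℝ its resolvent is compact: there is a compact bounded operator R on H with Ry ∈ Dom D and D(Ry) − λ·Ry = y for all y ∈ H, and R(Dx − λx) = x for all x ∈ Dom D. -/

import Mathlib

set_option linter.unusedSectionVars false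
noncomputable section Stmt16Aux

open scoped ComplexConjugate ENNReal NNReal

local notation "⟪" x ", " y "⟫" => @inner ℂ _ _ x y

/-- The Hilbert space `ℓ²(ℕ × Bool, ℂ)`. -/
noncomputable abbrev CantorH : Type := lp (fun _ : ℕ × Bool => ℂ) 2

/-- the flip involution -/
def flip2 : (ℕ × Bool) ≃ ℕ × Bool where
  toFun p := (p.1, !p.2)
  invFun p := (p.1, !p.2)
  left_inv p := by simp
  right_inv p := by simp

@[simp] lemma flip2_fst (p : ℕ × Bool) : (flip2 p).1 = p.1 := rfl
@[simp] lemma flip2_flip2 (p : ℕ × Bool) : flip2 (flip2 p) = p := by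
  simp [flip2]

/-- the symbol of the operator -/
def Sf (ℓ : ℕ → ℝ) (x : (ℕ × Bool) → ℂ) : (ℕ × Bool) → ℂ :=
  fun p => (ℓ p.1)⁻¹ • x (flip2 p)

lemma Sf_add (ℓ : ℕ → ℝ) (x y : (ℕ × Bool) → ℂ) : Sf ℓ (x + y) = Sf ℓ x + Sf ℓ y := by
  funext p; simp [Sf, smul_add]

lemma Sf_smul (ℓ : ℕ → ℝ) (c : ℂ) (x : (ℕ × Bool) → ℂ) : Sf ℓ (c • x) = c • Sf ℓ x := by
  funext p; simp only [Sf, Pi.smul_apply]; ring_nf; simp [Complex.real_smul]; ring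

lemma hasSum_norm_sq (f : CantorH) : HasSum (fun p => ‖f p‖ ^ 2) (‖f‖ ^ 2) := by
  have h := lp.hasSum_norm (p := 2) (by norm_num) f
  have h2 : (2 : ℝ≥0∞).toReal = (2 : ℝ) := by norm_num
  rw [h2] at h
  simpa [Real.rpow_two] using h

lemma memℓp_two_iff (f : (ℕ × Bool) → ℂ) :
    Memℓp f 2 ↔ Summable (fun p => ‖f p‖ ^ 2) := by
  rw [memℓp_gen_iff (by norm_num)]
  have h2 : (2 : ℝ≥0∞).toReal = (2 : ℝ) := by norm_num
  rw [h2]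
  simp [Real.rpow_two]

lemma summable_norm_sq (f : CantorH) : Summable (fun p => ‖f p‖ ^ 2) :=
  (hasSum_norm_sq f).summable


/-- domain of the maximal operator -/
def Tdom (ℓ : ℕ → ℝ) : Submodule ℂ CantorH where
  carrier := {x : CantorH | Memℓp (Sf ℓ ⇑x) 2}
  zero_mem' := by
    have : Sf ℓ ⇑(0 : CantorH) = 0 := by funext p; simp [Sf]
    simp only [Set.mem_setOf_eq, this]
    exact zero_memℓp
  add_mem' := by
    intro x y hx hy
    simp only [Set.mem_setOf_eq] at *
    have : Sf ℓ ⇑(x + y) = Sf ℓ ⇑x + Sf ℓ ⇑y := by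
      rw [lp.coeFn_add]; exact Sf_add ℓ _ _
    rw [this]; exact hx.add hy
  smul_mem' := by
    intro c x hx
    simp only [Set.mem_setOf_eq] at *
    have : Sf ℓ ⇑(c • x) = c • Sf ℓ ⇑x := by
      rw [lp.coeFn_smul]; exact Sf_smul ℓ _ _
    rw [this]; exact hx.const_smul c

/-- The maximal operator -/
def TmaxOp (ℓ : ℕ → ℝ) : CantorH →ₗ.[ℂ] CantorH where
  domain := Tdom ℓ
  toFun :=
    { toFun := fun x => (⟨Sf ℓ ⇑(x : CantorH), x.2⟩ : CantorH)
      map_add' := by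
        intro x y
        apply lp.ext
        rw [lp.coeFn_add]
        have h1 : ((x + y : Tdom ℓ) : CantorH) = (x : CantorH) + (y : CantorH) := rfl
        show Sf ℓ ⇑((x + y : Tdom ℓ) : CantorH) = Sf ℓ ⇑(x : CantorH) + Sf ℓ ⇑(y : CantorH)
        rw [h1, lp.coeFn_add]
        exact Sf_add ℓ _ _
      map_smul' := by
        intro c x
        apply lp.ext
        rw [lp.coeFn_smul]
        have h1 : ((c • x : Tdom ℓ) : CantorH) = c • (x : CantorH) := rfl
        show Sf ℓ ⇑((c • x : Tdom ℓ) : CantorH) = c • Sf ℓ ⇑(x : CantorH)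
        rw [h1, lp.coeFn_smul]
        exact Sf_smul ℓ _ _ }

lemma Top_domain (ℓ : ℕ → ℝ) : (TmaxOp ℓ).domain = Tdom ℓ := rfl

lemma Top_mem_domain (ℓ : ℕ → ℝ) (x : CantorH) :
    x ∈ (TmaxOp ℓ).domain ↔ Memℓp (Sf ℓ ⇑x) 2 := Iff.rfl

lemma Top_apply (ℓ : ℕ → ℝ) (x : (TmaxOp ℓ).domain) (p : ℕ × Bool) :
    (TmaxOp ℓ x) p = (ℓ p.1)⁻¹ • (x : CantorH) (flip2 p) := rfl


/-- evaluation as a continuous linear map -/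
def evalCLM (p : ℕ × Bool) : CantorH →L[ℂ] ℂ :=
  LinearMap.mkContinuous
    { toFun := fun f => f p
      map_add' := fun f g => by simp
      map_smul' := fun c f => by simp } 1
    (fun f => by
      show ‖f p‖ ≤ 1 * ‖f‖
      simpa using lp.norm_apply_le_norm (by norm_num) f p)

@[simp] lemma evalCLM_apply (p : ℕ × Bool) (f : CantorH) : evalCLM p f = f p := rfl

lemma single_apply' (p q : ℕ × Bool) (a : ℂ) :
    (lp.single 2 p a : CantorH) q = if q = p then a else 0 := by
  by_cases h : q = p
  · subst h; simp [lp.single_apply_self]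
  · rw [lp.single_apply_ne 2 p (E := fun _ : ℕ × Bool => ℂ) a h, if_neg h]

/-- truncation of an element to a finite set -/
def trunc (t : Finset (ℕ × Bool)) (x : CantorH) : CantorH :=
  ∑ p ∈ t, lp.single 2 p (x p)

lemma trunc_apply (t : Finset (ℕ × Bool)) (x : CantorH) (q : ℕ × Bool) :
    trunc t x q = if q ∈ t then x q else 0 := by
  rw [trunc, lp.coeFn_sum, Finset.sum_apply]
  rw [Finset.sum_congr rfl (fun p _ => single_apply' p q (x p))]
  simp [Finset.sum_ite_eq']

lemma trunc_support_finite (t : Finset (ℕ × Bool)) (x : CantorH) :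
    (Function.support fun p : ℕ × Bool => trunc t x p).Finite := by
  apply Set.Finite.subset t.finite_toSet
  intro q hq
  simp only [Function.mem_support, trunc_apply] at hq
  by_contra h
  exact hq (if_neg h)

lemma memℓp_two_of_finite_support (f : (ℕ × Bool) → ℂ)
    (hf : (Function.support f).Finite) : Memℓp f 2 :=
  (memℓp_zero (by simpa [Function.support] using hf)).of_exponent_ge (by norm_num)

lemma tendsto_trunc (x : CantorH) :
    Filter.Tendsto (fun t : Finset (ℕ × Bool) => trunc t x) Filter.atTop (nhds x) :=
  lp.hasSum_single (by norm_num) x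

lemma Tdom_dense (ℓ : ℕ → ℝ) : Dense ((Tdom ℓ : Submodule ℂ CantorH) : Set CantorH) := by
  intro x
  apply mem_closure_of_tendsto (tendsto_trunc x)
  filter_upwards with t
  show Memℓp (Sf ℓ ⇑(trunc t x)) 2
  apply memℓp_two_of_finite_support
  apply Set.Finite.subset ((trunc_support_finite t x).preimage
    (f := fun p => flip2 p) (Function.Injective.injOn flip2.injective))
  intro p hp
  simp only [Function.mem_support, Sf] at hp
  have : trunc t x (flip2 p) ≠ 0 := by
    intro h; apply hp; rw [h, smul_zero]
  exact this


lemma Tmax_graph_mem (ℓ : ℕ → ℝ) (z : CantorH × CantorH) :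
    z ∈ (TmaxOp ℓ).graph ↔ ∀ p, z.2 p = (ℓ p.1)⁻¹ • z.1 (flip2 p) := by
  rw [LinearPMap.mem_graph_iff]
  constructor
  · rintro ⟨y, h1, h2⟩ p
    rw [← h2, ← h1]
    exact Top_apply ℓ y p
  · intro h
    have hmem : z.1 ∈ (TmaxOp ℓ).domain := by
      rw [Top_mem_domain]
      have : Sf ℓ ⇑z.1 = ⇑z.2 := by
        funext p; rw [Sf, ← h p]
      rw [this]
      exact lp.memℓp z.2
    refine ⟨⟨z.1, hmem⟩, rfl, ?_⟩
    apply lp.ext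
    funext p
    rw [Top_apply ℓ _ p, ← h p]

lemma Tmax_isClosed (ℓ : ℕ → ℝ) : (TmaxOp ℓ).IsClosed := by
  have : ((TmaxOp ℓ).graph : Set (CantorH × CantorH)) =
      ⋂ p : ℕ × Bool, {z : CantorH × CantorH | z.2 p - (ℓ p.1)⁻¹ • z.1 (flip2 p) = 0} := by
    ext z
    simp only [SetLike.mem_coe, Tmax_graph_mem, Set.mem_iInter, Set.mem_setOf_eq, sub_eq_zero]
  show _root_.IsClosed ((TmaxOp ℓ).graph : Set (CantorH × CantorH))
  rw [this]
  apply isClosed_iInter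
  intro p
  apply isClosed_eq _ continuous_const
  have h1 : Continuous fun z : CantorH × CantorH => z.2 p :=
    (evalCLM p).continuous.comp continuous_snd
  have h2 : Continuous fun z : CantorH × CantorH => z.1 (flip2 p) :=
    (evalCLM (flip2 p)).continuous.comp continuous_fst
  exact h1.sub (h2.const_smul ((ℓ p.1)⁻¹ : ℝ) :
    Continuous fun y : CantorH × CantorH => (ℓ p.1)⁻¹ • y.1 (flip2 p))


/-- symmetrization of a finset -/
def msym (s : Finset (ℕ × Bool)) : Finset (ℕ × Bool) := s ∪ s.image flip2

lemma mem_msym_flip (s : Finset (ℕ × Bool)) (p : ℕ × Bool) :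
    flip2 p ∈ msym s ↔ p ∈ msym s := by
  simp only [msym, Finset.mem_union, Finset.mem_image]
  constructor
  · rintro (h | ⟨q, hq, hqe⟩)
    · exact Or.inr ⟨flip2 p, h, by simp⟩
    · left
      have : q = p := by
        have := congrArg flip2 hqe
        simpa using this
      rwa [← this]
  · rintro (h | ⟨q, hq, hqe⟩)
    · exact Or.inr ⟨p, h, rfl⟩
    · left; rw [← hqe]; simpa using hq

section D0

variable (ℓ : ℕ → ℝ) (D₀ : CantorH →ₗ.[ℂ] CantorH)
    (hdom : (D₀.domain : Set CantorH) =
      {x : CantorH | (Function.support fun p : ℕ × Bool => x p).Finite})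
    (hact : ∀ (ξ : D₀.domain) (n : ℕ) (b : Bool),
      (D₀ ξ) (n, b) = (ℓ n)⁻¹ • (ξ : CantorH) (n, !b))

include hdom hact

lemma D0_coords (ξ : D₀.domain) (p : ℕ × Bool) :
    (D₀ ξ) p = (ℓ p.1)⁻¹ • (ξ : CantorH) (flip2 p) := by
  obtain ⟨n, b⟩ := p
  exact hact ξ n b

lemma D0_le_Tmax : D₀ ≤ TmaxOp ℓ := by
  constructor
  · intro x hx
    rw [Top_mem_domain]
    apply memℓp_two_of_finite_support
    have hfin : (Function.support fun p : ℕ × Bool => x p).Finite := by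
      have : x ∈ (D₀.domain : Set CantorH) := hx
      rwa [hdom] at this
    apply Set.Finite.subset (hfin.preimage
      (f := fun p => flip2 p) (Function.Injective.injOn flip2.injective))
    intro p hp
    exact fun h => hp (smul_eq_zero_of_right _ h)
  · intro x y hxy
    apply lp.ext
    funext p
    rw [D0_coords ℓ D₀ hdom hact x p, Top_apply ℓ y p, hxy]

lemma D0_isClosable : D₀.IsClosable :=
  (Tmax_isClosed ℓ).isClosable.leIsClosable (D0_le_Tmax ℓ D₀ hdom hact)

lemma D0_closure_eq : D₀.closure = TmaxOp ℓ := by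
  apply LinearPMap.eq_of_eq_graph
  rw [← (D0_isClosable ℓ D₀ hdom hact).graph_closure_eq_closure_graph]
  apply le_antisymm
  · have h1 : _root_.IsClosed ((TmaxOp ℓ).graph : Set (CantorH × CantorH)) := Tmax_isClosed ℓ
    have h2 : D₀.graph ≤ (TmaxOp ℓ).graph :=
      LinearPMap.le_graph_of_le (D0_le_Tmax ℓ D₀ hdom hact)
    exact Submodule.topologicalClosure_minimal _ h2 h1
  · intro z hz
    rw [Tmax_graph_mem] at hz
    rw [← SetLike.mem_coe, Submodule.topologicalClosure_coe]
    have hm : Filter.Tendsto msym Filter.atTop Filter.atTop :=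
      Filter.tendsto_atTop_mono (fun s => Finset.le_iff_subset.2 Finset.subset_union_left)
        Filter.tendsto_id
    have hconv : Filter.Tendsto
        (fun s : Finset (ℕ × Bool) => (trunc (msym s) z.1, trunc (msym s) z.2))
        Filter.atTop (nhds z) := by
      have h1 := (tendsto_trunc z.1).comp hm
      have h2 := (tendsto_trunc z.2).comp hm
      simpa using h1.prodMk_nhds h2
    apply mem_closure_of_tendsto hconv
    filter_upwards with s
    have hxmem : trunc (msym s) z.1 ∈ D₀.domain := by
      have : trunc (msym s) z.1 ∈ (D₀.domain : Set CantorH) := by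
        rw [hdom]
        exact trunc_support_finite (msym s) z.1
      exact this
    have : (↑(⟨trunc (msym s) z.1, hxmem⟩ : D₀.domain),
        D₀ ⟨trunc (msym s) z.1, hxmem⟩) ∈ D₀.graph := LinearPMap.mem_graph D₀ _
    have heq : D₀ ⟨trunc (msym s) z.1, hxmem⟩ = trunc (msym s) z.2 := by
      apply lp.ext
      funext p
      rw [D0_coords ℓ D₀ hdom hact _ p]
      show (ℓ p.1)⁻¹ • trunc (msym s) z.1 (flip2 p) = trunc (msym s) z.2 p
      rw [trunc_apply, trunc_apply]
      by_cases h : p ∈ msym s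
      · rw [if_pos ((mem_msym_flip s p).2 h), if_pos h, hz p]
      · rw [if_neg (fun hc => h ((mem_msym_flip s p).1 hc)), if_neg h, smul_zero]
    rw [heq] at this
    exact this

end D0


section Adjoint

variable (ℓ : ℕ → ℝ)

lemma Tmax_dense : Dense ((TmaxOp ℓ).domain : Set CantorH) := Tdom_dense ℓ

lemma Tmax_symmetric : (TmaxOp ℓ).IsFormalAdjoint (TmaxOp ℓ) := by
  intro x y
  rw [lp.inner_eq_tsum, lp.inner_eq_tsum]
  rw [← Equiv.tsum_eq flip2 (fun p => @inner ℂ _ _ ((TmaxOp ℓ x) p) ((y : CantorH) p))]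
  apply tsum_congr
  intro p
  rw [RCLike.inner_apply, RCLike.inner_apply]
  rw [Top_apply ℓ x (flip2 p), Top_apply ℓ y p]
  simp only [flip2_fst, flip2_flip2]
  rw [Complex.real_smul, Complex.real_smul, map_mul, Complex.conj_ofReal]
  ring

lemma single_mem_Tdom (p : ℕ × Bool) (a : ℂ) :
    (lp.single 2 p a : CantorH) ∈ (TmaxOp ℓ).domain := by
  rw [Top_mem_domain]
  apply memℓp_two_of_finite_support
  apply Set.Finite.subset (Set.finite_singleton (flip2 p))
  intro q hq
  simp only [Function.mem_support, Sf] at hq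
  simp only [Set.mem_singleton_iff]
  by_contra h
  have : flip2 q ≠ p := fun hc => h (by rw [← hc]; simp)
  rw [single_apply' p (flip2 q) a, if_neg this, smul_zero] at hq
  exact hq rfl

lemma Tmax_single (p : ℕ × Bool) :
    TmaxOp ℓ ⟨lp.single 2 p 1, single_mem_Tdom ℓ p 1⟩ =
      lp.single 2 (flip2 p) (((ℓ p.1)⁻¹ : ℝ) : ℂ) := by
  apply lp.ext
  funext q
  rw [Top_apply, single_apply' _ q]
  show (ℓ q.1)⁻¹ • (lp.single 2 p 1 : CantorH) (flip2 q) = _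
  rw [single_apply' p (flip2 q) 1]
  by_cases h : q = flip2 p
  · have h2 : flip2 q = p := by rw [h]; simp
    rw [if_pos h2, if_pos h]
    have h3 : q.1 = p.1 := by rw [h]; rfl
    rw [h3, Complex.real_smul, mul_one]
  · have h2 : flip2 q ≠ p := fun hc => h (by rw [← hc]; simp)
    rw [if_neg h2, if_neg h, smul_zero]

lemma Tmax_adjoint_coords (y : (TmaxOp ℓ).adjoint.domain) (p : ℕ × Bool) :
    ((TmaxOp ℓ).adjoint y) p = (ℓ p.1)⁻¹ • (y : CantorH) (flip2 p) := by
  have h1 := LinearPMap.adjoint_isFormalAdjoint (hT := Tmax_dense ℓ) y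
    ⟨lp.single 2 p 1, single_mem_Tdom ℓ p 1⟩
  rw [Tmax_single ℓ p] at h1
  rw [lp.inner_single_right, lp.inner_single_right] at h1
  simp only [RCLike.inner_apply, map_one, mul_one] at h1
  have h2 := congrArg (starRingEnd ℂ) h1
  simp only [RingHomCompTriple.comp_apply, RingHom.id_apply, Complex.conj_conj, map_mul, map_one, one_mul] at h2
  rw [Complex.real_smul]
  rw [h2]
  simp [Complex.conj_ofReal, mul_comm]

lemma Tmax_isSelfAdjoint : IsSelfAdjoint (TmaxOp ℓ) := by
  rw [LinearPMap.isSelfAdjoint_def]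
  apply le_antisymm
  · constructor
    · intro y hy
      rw [Top_mem_domain]
      have : Sf ℓ ⇑y = ⇑((TmaxOp ℓ).adjoint ⟨y, hy⟩) := by
        funext p
        rw [Sf, Tmax_adjoint_coords ℓ ⟨y, hy⟩ p]
      rw [this]
      exact lp.memℓp _
    · intro x y hxy
      apply lp.ext
      funext p
      rw [Tmax_adjoint_coords ℓ x p, Top_apply ℓ y p, hxy]
  · exact (Tmax_symmetric ℓ).le_adjoint (hT := Tmax_dense ℓ)

end Adjoint


section Scalar

variable (ℓ : ℕ → ℝ) (lam : ℂ)

/-- inverse lengths -/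
def aR (n : ℕ) : ℝ := (ℓ n)⁻¹

/-- inverse lengths as complex numbers -/
def AC (n : ℕ) : ℂ := ((aR ℓ n : ℝ) : ℂ)

/-- determinant of the 2×2 block -/
def dC (n : ℕ) : ℂ := AC ℓ n ^ 2 - lam ^ 2

/-- the imaginary part bound -/
def epsB : ℝ := |lam.im|

/-- lower bound for the factors -/
def mB (n : ℕ) : ℝ := max (epsB lam) (aR ℓ n - ‖lam‖)

/-- the coefficient bound -/
def BB (n : ℕ) : ℝ := (‖lam‖ + aR ℓ n) / mB ℓ lam n ^ 2

variable {lam}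

lemma epsB_pos (him : lam.im ≠ 0) : 0 < epsB lam := abs_pos.2 him

lemma mB_pos (him : lam.im ≠ 0) (n : ℕ) : 0 < mB ℓ lam n :=
  lt_of_lt_of_le (epsB_pos him) (le_max_left _ _)

variable (hpos : ∀ n, 0 < ℓ n)
include hpos

lemma aR_pos (n : ℕ) : 0 < aR ℓ n := inv_pos.2 (hpos n)

lemma norm_AC (n : ℕ) : ‖AC ℓ n‖ = aR ℓ n := by
  rw [AC, Complex.norm_real, Real.norm_eq_abs, abs_of_pos (aR_pos ℓ hpos n)]

lemma norm_sub_ge (n : ℕ) : mB ℓ lam n ≤ ‖AC ℓ n - lam‖ := by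
  apply max_le
  · have h1 : |(AC ℓ n - lam).im| ≤ ‖AC ℓ n - lam‖ := by
      exact Complex.abs_im_le_norm _
    have h2 : (AC ℓ n - lam).im = -lam.im := by simp [AC]
    rw [h2, abs_neg] at h1
    exact h1
  · have := norm_sub_norm_le (AC ℓ n) lam
    rw [norm_AC ℓ hpos n] at this
    exact this

lemma norm_add_ge (n : ℕ) : mB ℓ lam n ≤ ‖AC ℓ n + lam‖ := by
  apply max_le
  · have h1 : |(AC ℓ n + lam).im| ≤ ‖AC ℓ n + lam‖ := by
      exact Complex.abs_im_le_norm _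
    have h2 : (AC ℓ n + lam).im = lam.im := by simp [AC]
    rw [h2] at h1
    exact h1
  · have := norm_sub_norm_le (AC ℓ n) (-lam)
    rw [norm_AC ℓ hpos n, norm_neg, sub_neg_eq_add] at this
    exact this

lemma norm_dC_ge (him : lam.im ≠ 0) (n : ℕ) : mB ℓ lam n ^ 2 ≤ ‖dC ℓ lam n‖ := by
  have h : dC ℓ lam n = (AC ℓ n - lam) * (AC ℓ n + lam) := by rw [dC]; ring
  rw [h, norm_mul, sq]
  exact mul_le_mul (norm_sub_ge ℓ hpos n) (norm_add_ge ℓ hpos n)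
    (mB_pos ℓ him n).le (norm_nonneg _)

lemma dC_ne (him : lam.im ≠ 0) (n : ℕ) : dC ℓ lam n ≠ 0 := by
  intro h
  have := norm_dC_ge ℓ hpos him n
  rw [h, norm_zero] at this
  nlinarith [mB_pos ℓ (lam := lam) him n]

lemma BB_nonneg (him : lam.im ≠ 0) (n : ℕ) : 0 ≤ BB ℓ lam n := by
  apply div_nonneg
  · have := aR_pos ℓ hpos n
    positivity
  · positivity

lemma BB_le (him : lam.im ≠ 0) (n : ℕ) :
    BB ℓ lam n ≤ (epsB lam)⁻¹ + 2 * ‖lam‖ * ((epsB lam)⁻¹) ^ 2 := by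
  have hε := epsB_pos (lam := lam) him
  have hm := mB_pos ℓ (lam := lam) him n
  rw [BB, div_le_iff₀ (by positivity)]
  have h1 : epsB lam * (aR ℓ n - ‖lam‖) ≤ mB ℓ lam n ^ 2 := by
    have k1 : epsB lam * (aR ℓ n - ‖lam‖) ≤ epsB lam * mB ℓ lam n :=
      mul_le_mul_of_nonneg_left (le_max_right _ _) hε.le
    have k2 : epsB lam * mB ℓ lam n ≤ mB ℓ lam n ^ 2 := by
      rw [sq]
      exact mul_le_mul_of_nonneg_right (le_max_left _ _) hm.le
    linarith
  have h2 : epsB lam ^ 2 ≤ mB ℓ lam n ^ 2 := by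
    apply pow_le_pow_left₀ hε.le (le_max_left _ _)
  have h3 : epsB lam * (epsB lam)⁻¹ = 1 := mul_inv_cancel₀ hε.ne'
  have e1 : aR ℓ n - ‖lam‖ ≤ (epsB lam)⁻¹ * mB ℓ lam n ^ 2 := by
    have := mul_le_mul_of_nonneg_left h1 (inv_nonneg.2 hε.le)
    calc aR ℓ n - ‖lam‖ = (epsB lam)⁻¹ * (epsB lam * (aR ℓ n - ‖lam‖)) := by
          rw [← mul_assoc, inv_mul_cancel₀ hε.ne']; ring
      _ ≤ (epsB lam)⁻¹ * mB ℓ lam n ^ 2 := this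
  have e2 : 2 * ‖lam‖ ≤ 2 * ‖lam‖ * (((epsB lam)⁻¹) ^ 2 * mB ℓ lam n ^ 2) := by
    have k : (1 : ℝ) ≤ ((epsB lam)⁻¹) ^ 2 * mB ℓ lam n ^ 2 := by
      have := mul_le_mul_of_nonneg_left h2 (by positivity : (0:ℝ) ≤ ((epsB lam)⁻¹) ^ 2)
      calc (1 : ℝ) = ((epsB lam)⁻¹) ^ 2 * epsB lam ^ 2 := by
            field_simp
        _ ≤ _ := this
    nlinarith [norm_nonneg lam]
  calc ‖lam‖ + aR ℓ n = (aR ℓ n - ‖lam‖) + 2 * ‖lam‖ := by ring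
    _ ≤ (epsB lam)⁻¹ * mB ℓ lam n ^ 2 + 2 * ‖lam‖ * (((epsB lam)⁻¹) ^ 2 * mB ℓ lam n ^ 2) :=
        add_le_add e1 e2
    _ = ((epsB lam)⁻¹ + 2 * ‖lam‖ * ((epsB lam)⁻¹) ^ 2) * mB ℓ lam n ^ 2 := by ring

lemma aR_tendsto (hlim : Filter.Tendsto ℓ Filter.atTop (nhds 0)) :
    Filter.Tendsto (aR ℓ) Filter.atTop Filter.atTop := by
  have h : Filter.Tendsto ℓ Filter.atTop (nhdsWithin 0 (Set.Ioi 0)) := by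
    rw [tendsto_nhdsWithin_iff]
    exact ⟨hlim, Filter.Eventually.of_forall (fun n => hpos n)⟩
  exact h.inv_tendsto_nhdsGT_zero

lemma mB_tendsto (hlim : Filter.Tendsto ℓ Filter.atTop (nhds 0)) :
    Filter.Tendsto (mB ℓ lam) Filter.atTop Filter.atTop := by
  apply Filter.tendsto_atTop_mono (fun n => le_max_right (epsB lam) (aR ℓ n - ‖lam‖))
  exact Filter.tendsto_atTop_add_const_right _ _ (aR_tendsto ℓ hpos hlim)

lemma BB_tendsto (him : lam.im ≠ 0) (hlim : Filter.Tendsto ℓ Filter.atTop (nhds 0)) :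
    Filter.Tendsto (BB ℓ lam) Filter.atTop (nhds 0) := by
  have hm := mB_tendsto ℓ (lam := lam) hpos hlim
  apply squeeze_zero (fun n => BB_nonneg ℓ hpos him n)
    (g := fun n => 2 * ‖lam‖ * (mB ℓ lam n ^ 2)⁻¹ + (mB ℓ lam n)⁻¹)
  · intro n
    have hmn := mB_pos ℓ (lam := lam) him n
    have hle : ‖lam‖ + aR ℓ n ≤ 2 * ‖lam‖ + mB ℓ lam n := by
      have : aR ℓ n - ‖lam‖ ≤ mB ℓ lam n := le_max_right _ _
      linarith
    calc BB ℓ lam n ≤ (2 * ‖lam‖ + mB ℓ lam n) / mB ℓ lam n ^ 2 := by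
          apply div_le_div_of_nonneg_right hle (by positivity) |>.trans_eq rfl
      _ = 2 * ‖lam‖ * (mB ℓ lam n ^ 2)⁻¹ + (mB ℓ lam n)⁻¹ := by
          field_simp
  · have t1 : Filter.Tendsto (fun n => (mB ℓ lam n ^ 2)⁻¹) Filter.atTop (nhds 0) := by
      apply Filter.Tendsto.inv_tendsto_atTop
      have : Filter.Tendsto (fun n => mB ℓ lam n * mB ℓ lam n) Filter.atTop Filter.atTop :=
        Filter.Tendsto.atTop_mul_atTop₀ hm hm
      simpa [sq] using this
    have t2 : Filter.Tendsto (fun n => (mB ℓ lam n)⁻¹) Filter.atTop (nhds 0) :=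
      Filter.Tendsto.inv_tendsto_atTop hm
    have := (t1.const_mul (2 * ‖lam‖)).add t2
    simpa using this

end Scalar


section KeyBound

lemma summable_norm_sq_flip (y : CantorH) :
    Summable (fun p => ‖y (flip2 p)‖ ^ 2) :=
  (Equiv.summable_iff flip2 (f := fun p => ‖y p‖ ^ 2)).2 (summable_norm_sq y)

lemma key_summable (y : CantorH) (c : (ℕ × Bool) → ℝ) (C : ℝ)
    (hc : ∀ p, 0 ≤ c p) (hC : ∀ p, c p ≤ C) (f : (ℕ × Bool) → ℂ)
    (hf : ∀ p, ‖f p‖ ≤ c p * (‖y p‖ + ‖y (flip2 p)‖)) :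
    Summable (fun p => ‖f p‖ ^ 2) := by
  refine Summable.of_nonneg_of_le (fun p => by positivity) (fun p => ?_)
    (((summable_norm_sq y).add (summable_norm_sq_flip y)).mul_left (2 * C ^ 2))
  have h1 := hf p
  have h2 := hc p
  have h3 := hC p
  have h4 := norm_nonneg (f p)
  have h5 := norm_nonneg (y p)
  have h6 := norm_nonneg (y (flip2 p))
  have k1 := mul_self_le_mul_self h4 h1
  have k2 := mul_self_le_mul_self h2 h3
  have k3 := sq_nonneg (‖y p‖ - ‖y (flip2 p)‖)
  have k4 := sq_nonneg (‖y p‖ + ‖y (flip2 p)‖)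
  nlinarith [mul_le_mul_of_nonneg_right k2 k4]

lemma key_norm_le (y : CantorH) (c : (ℕ × Bool) → ℝ) (C : ℝ) (hCpos : 0 ≤ C)
    (hc : ∀ p, 0 ≤ c p) (hC : ∀ p, c p ≤ C) (g : CantorH)
    (hf : ∀ p, ‖g p‖ ≤ c p * (‖y p‖ + ‖y (flip2 p)‖)) :
    ‖g‖ ≤ 2 * C * ‖y‖ := by
  have hsq : ‖g‖ ^ 2 ≤ (2 * C * ‖y‖) ^ 2 := by
    rw [← (hasSum_norm_sq g).tsum_eq]
    have hbound : ∀ p, ‖g p‖ ^ 2 ≤ 2 * C ^ 2 * (‖y p‖ ^ 2 + ‖y (flip2 p)‖ ^ 2) := by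
      intro p
      have h1 := hf p
      have h2 := hc p
      have h3 := hC p
      have h4 := norm_nonneg (g p)
      have h5 := norm_nonneg (y p)
      have h6 := norm_nonneg (y (flip2 p))
      have k1 := mul_self_le_mul_self h4 h1
      have k2 := mul_self_le_mul_self h2 h3
      have k3 := sq_nonneg (‖y p‖ - ‖y (flip2 p)‖)
      have k4 := sq_nonneg (‖y p‖ + ‖y (flip2 p)‖)
      nlinarith [mul_le_mul_of_nonneg_right k2 k4]
    have hsum2 : Summable (fun p => 2 * C ^ 2 * (‖y p‖ ^ 2 + ‖y (flip2 p)‖ ^ 2)) :=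
      ((summable_norm_sq y).add (summable_norm_sq_flip y)).mul_left _
    calc (∑' p, ‖g p‖ ^ 2) ≤ ∑' p, 2 * C ^ 2 * (‖y p‖ ^ 2 + ‖y (flip2 p)‖ ^ 2) :=
          (summable_norm_sq g).tsum_le_tsum hbound hsum2
      _ = 2 * C ^ 2 * ((∑' p, ‖y p‖ ^ 2) + ∑' p, ‖y (flip2 p)‖ ^ 2) := by
          rw [tsum_mul_left, (summable_norm_sq y).tsum_add (summable_norm_sq_flip y)]
      _ = 2 * C ^ 2 * (‖y‖ ^ 2 + ‖y‖ ^ 2) := by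
          rw [(hasSum_norm_sq y).tsum_eq,
            Equiv.tsum_eq flip2 (f := fun p => ‖y p‖ ^ 2), (hasSum_norm_sq y).tsum_eq]
      _ = (2 * C * ‖y‖) ^ 2 := by ring
  calc ‖g‖ = Real.sqrt (‖g‖ ^ 2) := by rw [Real.sqrt_sq (norm_nonneg g)]
    _ ≤ Real.sqrt ((2 * C * ‖y‖) ^ 2) := Real.sqrt_le_sqrt hsq
    _ = 2 * C * ‖y‖ := Real.sqrt_sq (by positivity)

end KeyBound


section Resolvent

variable (ℓ : ℕ → ℝ) (lam : ℂ)

/-- the resolvent, as a function on coordinates -/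
def Rfun (y : (ℕ × Bool) → ℂ) : (ℕ × Bool) → ℂ :=
  fun p => (dC ℓ lam p.1)⁻¹ * (lam * y p + AC ℓ p.1 * y (flip2 p))

variable {lam} (hpos : ∀ n, 0 < ℓ n) (him : lam.im ≠ 0)
include hpos him

lemma Rfun_bound (y : CantorH) (p : ℕ × Bool) :
    ‖Rfun ℓ lam (⇑y) p‖ ≤ BB ℓ lam p.1 * (‖y p‖ + ‖y (flip2 p)‖) := by
  rw [Rfun, norm_mul, norm_inv]
  have hd := norm_dC_ge ℓ hpos him p.1
  have hm := mB_pos ℓ (lam := lam) him p.1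
  have ha := aR_pos ℓ hpos p.1
  have h1 : ‖lam * y p + AC ℓ p.1 * y (flip2 p)‖ ≤
      ‖lam‖ * ‖y p‖ + aR ℓ p.1 * ‖y (flip2 p)‖ := by
    calc ‖lam * y p + AC ℓ p.1 * y (flip2 p)‖ ≤
        ‖lam * y p‖ + ‖AC ℓ p.1 * y (flip2 p)‖ := norm_add_le _ _
      _ = ‖lam‖ * ‖y p‖ + aR ℓ p.1 * ‖y (flip2 p)‖ := by
          rw [norm_mul, norm_mul, norm_AC ℓ hpos]
  have h2 : ‖dC ℓ lam p.1‖⁻¹ ≤ (mB ℓ lam p.1 ^ 2)⁻¹ := by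
    apply inv_anti₀ (by positivity) hd
  calc ‖dC ℓ lam p.1‖⁻¹ * ‖lam * y p + AC ℓ p.1 * y (flip2 p)‖ ≤
      (mB ℓ lam p.1 ^ 2)⁻¹ * (‖lam‖ * ‖y p‖ + aR ℓ p.1 * ‖y (flip2 p)‖) := by
        apply mul_le_mul h2 h1 (norm_nonneg _) (by positivity)
    _ ≤ BB ℓ lam p.1 * (‖y p‖ + ‖y (flip2 p)‖) := by
        rw [BB, div_eq_mul_inv]
        have hyp := norm_nonneg (y p)
        have hyf := norm_nonneg (y (flip2 p))
        have hl := norm_nonneg lam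
        have hinv : (0:ℝ) ≤ (mB ℓ lam p.1 ^ 2)⁻¹ := by positivity
        nlinarith [mul_nonneg (mul_nonneg hinv ha.le) hyp,
          mul_nonneg (mul_nonneg hinv hl) hyf]

/-- the constant bounding the resolvent coefficients -/
def MC : ℝ := (epsB lam)⁻¹ + 2 * ‖lam‖ * ((epsB lam)⁻¹) ^ 2

lemma MC_nonneg : 0 ≤ MC (lam := lam) := by
  have := epsB_pos (lam := lam) him
  rw [MC]
  positivity

lemma Rfun_memℓp (y : CantorH) : Memℓp (Rfun ℓ lam (⇑y)) 2 := by
  rw [memℓp_two_iff]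
  exact key_summable y (fun p => BB ℓ lam p.1) (MC (lam := lam))
    (fun p => BB_nonneg ℓ hpos him p.1) (fun p => BB_le ℓ hpos him p.1)
    _ (fun p => Rfun_bound ℓ hpos him y p)

/-- the resolvent as a linear map -/
def Rlin : CantorH →ₗ[ℂ] CantorH where
  toFun y := (⟨Rfun ℓ lam (⇑y), Rfun_memℓp ℓ hpos him y⟩ : CantorH)
  map_add' y z := by
    apply lp.ext
    rw [lp.coeFn_add (⟨Rfun ℓ lam ⇑y, Rfun_memℓp ℓ hpos him y⟩ : CantorH)]
    funext p
    show Rfun ℓ lam (⇑(y + z)) p = Rfun ℓ lam ⇑y p + Rfun ℓ lam ⇑z p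
    rw [lp.coeFn_add]
    simp only [Rfun, Pi.add_apply]
    ring
  map_smul' c y := by
    apply lp.ext
    rw [RingHom.id_apply, lp.coeFn_smul c (⟨Rfun ℓ lam ⇑y, Rfun_memℓp ℓ hpos him y⟩ : CantorH)]
    funext p
    show Rfun ℓ lam (⇑(c • y)) p = c • Rfun ℓ lam ⇑y p
    rw [lp.coeFn_smul]
    simp only [Rfun, Pi.smul_apply, smul_eq_mul]
    ring

lemma Rlin_apply (y : CantorH) (p : ℕ × Bool) :
    (Rlin ℓ hpos him y) p = Rfun ℓ lam (⇑y) p := rfl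

lemma Rlin_norm (y : CantorH) :
    ‖Rlin ℓ hpos him y‖ ≤ 2 * MC (lam := lam) * ‖y‖ :=
  key_norm_le y (fun p => BB ℓ lam p.1) (MC (lam := lam)) (MC_nonneg ℓ hpos him)
    (fun p => BB_nonneg ℓ hpos him p.1) (fun p => BB_le ℓ hpos him p.1)
    _ (fun p => Rfun_bound ℓ hpos him y p)

/-- the resolvent as a continuous linear map -/
def RCLM : CantorH →L[ℂ] CantorH :=
  LinearMap.mkContinuous (Rlin ℓ hpos him) (2 * MC (lam := lam))
    (fun y => Rlin_norm ℓ hpos him y)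

lemma RCLM_apply (y : CantorH) (p : ℕ × Bool) :
    (RCLM ℓ hpos him y) p = Rfun ℓ lam (⇑y) p := rfl

end Resolvent


section Identities

variable (ℓ : ℕ → ℝ) {lam : ℂ} (hpos : ∀ n, 0 < ℓ n) (him : lam.im ≠ 0)
include hpos him

lemma smul_eq_AC (n : ℕ) (z : ℂ) : (ℓ n)⁻¹ • z = AC ℓ n * z := by
  rw [AC, aR, Complex.real_smul, Complex.ofReal_inv]

lemma res_key (y : CantorH) (p : ℕ × Bool) :
    Sf ℓ (⇑(RCLM ℓ hpos him y)) p = y p + lam * Rfun ℓ lam (⇑y) p := by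
  rw [Sf, RCLM_apply, smul_eq_AC ℓ hpos him]
  rw [Rfun, Rfun]
  simp only [flip2_fst, flip2_flip2]
  have hd := dC_ne ℓ hpos him p.1
  rw [dC] at hd ⊢
  field_simp
  ring

lemma res_mem (y : CantorH) : RCLM ℓ hpos him y ∈ (TmaxOp ℓ).domain := by
  rw [Top_mem_domain]
  have : Sf ℓ (⇑(RCLM ℓ hpos him y)) = ⇑(y + lam • RCLM ℓ hpos him y) := by
    funext p
    rw [res_key ℓ hpos him y p, lp.coeFn_add, lp.coeFn_smul]
    simp only [Pi.add_apply, Pi.smul_apply, smul_eq_mul]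
    rfl
  rw [this]
  exact lp.memℓp _

lemma res_id1 (y : CantorH) :
    TmaxOp ℓ ⟨RCLM ℓ hpos him y, res_mem ℓ hpos him y⟩ - lam • RCLM ℓ hpos him y = y := by
  apply lp.ext
  funext p
  rw [lp.coeFn_sub]
  simp only [Pi.sub_apply]
  rw [Top_apply]
  have h1 : (ℓ p.1)⁻¹ • (RCLM ℓ hpos him y) (flip2 p) = Sf ℓ (⇑(RCLM ℓ hpos him y)) p := rfl
  rw [h1, res_key ℓ hpos him y p, lp.coeFn_smul]
  simp only [Pi.smul_apply, smul_eq_mul]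
  have h2 : (RCLM ℓ hpos him y) p = Rfun ℓ lam (⇑y) p := rfl
  rw [h2]
  ring

lemma res_id2 (x : (TmaxOp ℓ).domain) :
    RCLM ℓ hpos him (TmaxOp ℓ x - lam • (x : CantorH)) = x := by
  apply lp.ext
  funext p
  rw [RCLM_apply, Rfun]
  have hc : ∀ q, (⇑(TmaxOp ℓ x - lam • (x : CantorH))) q =
      AC ℓ q.1 * (x : CantorH) (flip2 q) - lam * (x : CantorH) q := by
    intro q
    rw [lp.coeFn_sub]
    simp only [Pi.sub_apply]
    rw [Top_apply, smul_eq_AC ℓ hpos him, lp.coeFn_smul]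
    simp only [Pi.smul_apply, smul_eq_mul]
  rw [hc p, hc (flip2 p)]
  simp only [flip2_fst, flip2_flip2]
  have hd := dC_ne ℓ hpos him p.1
  rw [dC] at hd ⊢
  field_simp
  ring

end Identities


section Compactness

/-- coordinate inclusion as a continuous linear map -/
def singleCLM (p : ℕ × Bool) : ℂ →L[ℂ] CantorH :=
  LinearMap.mkContinuous
    { toFun := fun a => lp.single 2 p a
      map_add' := fun a b => by
        apply lp.ext
        rw [lp.coeFn_add]
        funext q
        rw [single_apply']
        simp only [Pi.add_apply, single_apply']
        by_cases h : q = p <;> simp [h]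
      map_smul' := fun c a => by
        apply lp.ext
        rw [RingHom.id_apply, lp.coeFn_smul]
        funext q
        rw [single_apply']
        simp only [Pi.smul_apply, single_apply', smul_eq_mul]
        by_cases h : q = p <;> simp [h] } 1
    (fun a => by
      show ‖(lp.single 2 p a : CantorH)‖ ≤ 1 * ‖a‖
      rw [one_mul]
      exact le_of_eq (lp.norm_single (E := fun _ : ℕ × Bool => ℂ) (by norm_num) p a))

lemma singleCLM_compact (p : ℕ × Bool) : IsCompactOperator (singleCLM p) := by
  refine ⟨singleCLM p '' Metric.closedBall 0 1, ?_, ?_⟩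
  · exact (isCompact_closedBall (0 : ℂ) 1).image (singleCLM p).continuous
  · apply Filter.mem_of_superset (Metric.closedBall_mem_nhds (0 : ℂ) one_pos)
    intro a ha
    exact Set.mem_image_of_mem _ ha

/-- the finite truncation sets -/
def FN (N : ℕ) : Finset (ℕ × Bool) := Finset.range N ×ˢ Finset.univ

lemma mem_FN (N : ℕ) (p : ℕ × Bool) : p ∈ FN N ↔ p.1 < N := by
  simp [FN]

lemma sum_compact {ι : Type*} [DecidableEq ι] (s : Finset ι) (f : ι → (CantorH →L[ℂ] CantorH))
    (hf : ∀ i ∈ s, IsCompactOperator (f i)) :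
    IsCompactOperator (⇑(∑ i ∈ s, f i)) := by
  induction s using Finset.induction_on with
  | empty => simpa using isCompactOperator_zero
  | insert a t hnotmem ih =>
    rw [Finset.sum_insert hnotmem]
    have h1 : IsCompactOperator (f a) := hf a (Finset.mem_insert_self a t)
    have h2 : IsCompactOperator (⇑(∑ i ∈ t, f i)) :=
      ih (fun i hi => hf i (Finset.mem_insert_of_mem hi))
    have : ⇑(f a + ∑ i ∈ t, f i) = ⇑(f a) + ⇑(∑ i ∈ t, f i) := rfl
    rw [this]
    exact h1.add h2

variable (ℓ : ℕ → ℝ) {lam : ℂ} (hpos : ∀ n, 0 < ℓ n) (him : lam.im ≠ 0)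
include hpos him

/-- finite rank approximations of the resolvent -/
def RN (N : ℕ) : CantorH →L[ℂ] CantorH :=
  ∑ p ∈ FN N, (singleCLM p).comp ((evalCLM p).comp (RCLM ℓ hpos him))

lemma RN_apply (N : ℕ) (y : CantorH) :
    RN ℓ hpos him N y = trunc (FN N) (RCLM ℓ hpos him y) := by
  rw [RN, trunc, ContinuousLinearMap.sum_apply]
  rfl

lemma RN_compact (N : ℕ) : IsCompactOperator (RN ℓ hpos him N) := by
  apply sum_compact
  intro p _
  have h1 : IsCompactOperator
      ((singleCLM p) ∘ ((evalCLM p).comp (RCLM ℓ hpos him))) :=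
    (singleCLM_compact p).comp_clm _
  exact h1

lemma R_sub_RN_norm (N : ℕ) (δ : ℝ) (hδ : 0 ≤ δ) (hB : ∀ n, N ≤ n → BB ℓ lam n ≤ δ) :
    ‖RCLM ℓ hpos him - RN ℓ hpos him N‖ ≤ 2 * δ := by
  apply ContinuousLinearMap.opNorm_le_bound _ (by linarith)
  intro y
  have hcoords : ∀ p : ℕ × Bool, ((RCLM ℓ hpos him - RN ℓ hpos him N) y) p =
      if p.1 < N then 0 else Rfun ℓ lam (⇑y) p := by
    intro p
    rw [ContinuousLinearMap.sub_apply, lp.coeFn_sub]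
    simp only [Pi.sub_apply]
    rw [RN_apply, trunc_apply, RCLM_apply]
    by_cases h : p.1 < N
    · rw [if_pos ((mem_FN N p).2 h), if_pos h, sub_self]
    · rw [if_neg (fun hc => h ((mem_FN N p).1 hc)), if_neg h, sub_zero]
  have h2 : 2 * δ * ‖y‖ = 2 * δ * ‖y‖ := rfl
  apply key_norm_le y (fun p => if p.1 < N then 0 else BB ℓ lam p.1) δ hδ
  · intro p
    by_cases h : p.1 < N
    · simp [h]
    · simp only [h, if_false]
      exact BB_nonneg ℓ hpos him p.1
  · intro p
    by_cases h : p.1 < N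
    · simpa [h] using hδ
    · simp only [h, if_false]
      exact hB p.1 (le_of_not_gt h)
  · intro p
    rw [hcoords p]
    by_cases h : p.1 < N
    · simp [h]
    · simp only [h, if_false]
      exact Rfun_bound ℓ hpos him y p

lemma RN_tendsto (hlim : Filter.Tendsto ℓ Filter.atTop (nhds 0)) :
    Filter.Tendsto (fun N => RN ℓ hpos him N) Filter.atTop (nhds (RCLM ℓ hpos him)) := by
  rw [Metric.tendsto_atTop]
  intro δ hδ
  have hB := BB_tendsto ℓ hpos him hlim
  have hev : ∀ᶠ n in Filter.atTop, BB ℓ lam n ≤ δ / 8 := by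
    exact hB.eventually_le_const (show (0:ℝ) < δ / 8 by linarith)
  obtain ⟨N₀, hN₀⟩ := Filter.eventually_atTop.1 hev
  refine ⟨N₀, fun N hN => ?_⟩
  rw [dist_eq_norm, norm_sub_rev]
  have := R_sub_RN_norm ℓ hpos him N (δ / 8) (by linarith)
    (fun n hn => hN₀ n (le_trans hN hn))
  linarith

lemma RCLM_compact (hlim : Filter.Tendsto ℓ Filter.atTop (nhds 0)) :
    IsCompactOperator (RCLM ℓ hpos him) :=
  isCompactOperator_of_tendsto (RN_tendsto ℓ hpos him hlim)
    (Filter.Eventually.of_forall (fun N => RN_compact ℓ hpos him N))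

end Compactness


/-- `R` is the resolvent of the (unbounded) operator `T` at `lam`. -/
def IsResolvent {K : Type*} [NormedAddCommGroup K] [InnerProductSpace ℂ K]
    (T : K →ₗ.[ℂ] K) (lam : ℂ) (R : K →L[ℂ] K) : Prop :=
  (∀ y : K, ∃ h : R y ∈ T.domain, T ⟨R y, h⟩ - lam • R y = y) ∧
  ∀ x : T.domain, R (T x - lam • (x : K)) = x

/-- **Connes' Cantor-set spectral triple, compact resolvent.** If
`ℓ_n > 0` and `ℓ_n → 0`, then the closure `D` of the operator
`(D₀ξ)(n, b) = ℓ_n⁻¹ ξ(n, ¬b)` (defined on finitely supported elements of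
`ℓ²(ℕ × Bool)`) is self-adjoint and has compact resolvent. -/
theorem stmt16
    (ℓ : ℕ → ℝ) (hpos : ∀ n, 0 < ℓ n) (hlim : Filter.Tendsto ℓ Filter.atTop (nhds 0))
    (D₀ : CantorH →ₗ.[ℂ] CantorH)
    (hdom : (D₀.domain : Set CantorH) =
      {x : CantorH | (Function.support fun p : ℕ × Bool => x p).Finite})
    (hact : ∀ (ξ : D₀.domain) (n : ℕ) (b : Bool),
      (D₀ ξ) (n, b) = (ℓ n)⁻¹ • (ξ : CantorH) (n, !b)) :
    IsSelfAdjoint D₀.closure ∧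
    ∀ lam : ℂ, lam.im ≠ 0 →
      ∃ R : CantorH →L[ℂ] CantorH,
        IsCompactOperator R ∧ IsResolvent D₀.closure lam R := by
  have hclos := D0_closure_eq ℓ D₀ hdom hact
  constructor
  · rw [hclos]
    exact Tmax_isSelfAdjoint ℓ
  · intro lam him
    rw [hclos]
    exact ⟨RCLM ℓ hpos him, RCLM_compact ℓ hpos him hlim,
      ⟨fun y => ⟨res_mem ℓ hpos him y, res_id1 ℓ hpos him y⟩,
       fun x => res_id2 ℓ hpos him x⟩⟩

end Stmt16Aux
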